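/- For all real numbers $\lambda, \mu, a \geq 0$, all $\varepsilon > 0$, and all $p \geq 2$ with $p' = p/(p-1)$, the inequality $\lambda\mu \leq \max\{\varepsilon^{-1}, \varepsilon^{1/(1-p)}\}(a^{p-1} + \lambda)^{p'-2}\lambda^2 + \varepsilon(a + \mu)^{p-2}\mu^2$ holds. -/

import Mathlib

open Real

lemma rpow_two' (x : ℝ) : x ^ (2:ℝ) = x ^ 2 := by
  rw [show ((2:ℝ)) = ((2:ℕ):ℝ) by norm_num, Real.rpow_natCast]

lemma shifted_young (p a x y : ℝ) (hp : 2 ≤ p) (ha : 0 ≤ a) (hx : 0 ≤ x) (hy : 0 ≤ y) :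
    x * y ≤ (a ^ (p - 1) + x) ^ (p / (p - 1) - 2) * x ^ 2 + (a + y) ^ (p - 2) * y ^ 2 := by
  have hp1 : (1:ℝ) < p := lt_of_lt_of_le one_lt_two hp
  have hp1' : (0:ℝ) < p - 1 := by linarith
  have hp2 : (0:ℝ) ≤ p - 2 := by linarith
  have hB : 0 ≤ a ^ (p - 1) := Real.rpow_nonneg ha _
  have h1 : (0:ℝ) ≤ (a ^ (p - 1) + x) ^ (p / (p - 1) - 2) * x ^ 2 :=
    mul_nonneg (Real.rpow_nonneg (by linarith) _) (sq_nonneg _)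
  have h2' : (0:ℝ) ≤ (a + y) ^ (p - 2) * y ^ 2 :=
    mul_nonneg (Real.rpow_nonneg (by linarith) _) (sq_nonneg _)
  rcases eq_or_lt_of_le hx with hx0 | hx0
  · rw [← hx0]; simpa using by linarith
  rcases eq_or_lt_of_le hy with hy0 | hy0
  · rw [← hy0]; simpa using by linarith
  by_cases hcase : x ≤ y * a ^ (p - 2)
  · -- easy case: x*y ≤ a^(p-2) * y^2 ≤ (a+y)^(p-2) * y^2
    have h2 : a ^ (p - 2) ≤ (a + y) ^ (p - 2) :=
      Real.rpow_le_rpow ha (by linarith) hp2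
    have h3 : x * y ≤ (a ^ (p - 2)) * y ^ 2 := by nlinarith
    have h4 : (a ^ (p - 2)) * y ^ 2 ≤ (a + y) ^ (p - 2) * y ^ 2 :=
      mul_le_mul_of_nonneg_right h2 (sq_nonneg _)
    linarith
  push_neg at hcase
  -- main case
  set S := a ^ (p - 1) + x with hSdef
  have hS : 0 < S := by positivity
  have hay : 0 < a + y := by linarith
  -- key: y * S ≤ x * (a + y)
  have hkey : y * S ≤ x * (a + y) := by
    have haa : y * a ^ (p - 1) ≤ x * a := by
      have hsplit : a ^ (p - 1) = a ^ (p - 2) * a := by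
        rcases eq_or_lt_of_le ha with ha0 | ha0
        · rw [← ha0, Real.zero_rpow hp1'.ne']
          simp
        · rw [← Real.rpow_add_one ha0.ne']; ring_nf
      rw [hsplit]
      calc y * (a ^ (p - 2) * a) = (y * a ^ (p - 2)) * a := by ring
        _ ≤ x * a := mul_le_mul_of_nonneg_right hcase.le ha
    have hSS : y * S = y * a ^ (p - 1) + y * x := by rw [hSdef]; ring
    rw [hSS]; nlinarith
  set w := (x / S) ^ ((p - 2) / p) with hwdef
  have hxS : 0 < x / S := div_pos hx0 hS
  have hw : 0 < w := Real.rpow_pos_of_pos hxS _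
  have hq1 : (1:ℝ) < p / (p - 1) := by rw [lt_div_iff₀ hp1']; linarith
  have hconj : (p / (p - 1)).HolderConjugate p := by
    refine Real.holderConjugate_iff.mpr ⟨?_, ?_⟩
    · exact hq1
    · rw [inv_div]
      field_simp
      ring
  have hyoung := Real.young_inequality_of_nonneg
    (mul_nonneg hx (le_of_lt hw)) (le_of_lt (div_pos hy0 hw)) hconj
  have hxy : x * y = (x * w) * (y / w) := by field_simp
  -- term 1
  have hT1 : (x * w) ^ (p / (p - 1)) / (p / (p - 1)) ≤ S ^ (p / (p - 1) - 2) * x ^ 2 := by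
    have e1 : (x * w) ^ (p / (p - 1)) = x ^ (p / (p - 1)) * w ^ (p / (p - 1)) :=
      Real.mul_rpow hx (le_of_lt hw)
    have e2 : w ^ (p / (p - 1)) = (x / S) ^ ((p - 2) / (p - 1)) := by
      rw [hwdef, ← Real.rpow_mul hxS.le]
      congr 1
      field_simp
    have e3 : (x / S) ^ ((p - 2) / (p - 1)) = x ^ ((p - 2) / (p - 1)) * S ^ (p / (p - 1) - 2) := by
      rw [Real.div_rpow hx hS.le]
      rw [show p / (p - 1) - 2 = -((p - 2) / (p - 1)) by field_simp; ring]
      rw [Real.rpow_neg hS.le]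
      ring
    have e4 : x ^ (p / (p - 1)) * x ^ ((p - 2) / (p - 1)) = x ^ 2 := by
      rw [← Real.rpow_add hx0, show p / (p - 1) + (p - 2) / (p - 1) = 2 by field_simp; ring,
        rpow_two']
    have e5 : (x * w) ^ (p / (p - 1)) = S ^ (p / (p - 1) - 2) * x ^ 2 := by
      rw [e1, e2, e3, ← mul_assoc, e4]; ring
    rw [e5]
    apply div_le_self _ hq1.le
    exact mul_nonneg (Real.rpow_nonneg hS.le _) (sq_nonneg _)
  -- term 2
  have hT2 : (y / w) ^ p / p ≤ (a + y) ^ (p - 2) * y ^ 2 := by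
    have f1 : (y / w) ^ p = y ^ p / ((x / S) ^ (p - 2)) := by
      rw [Real.div_rpow hy (le_of_lt hw), hwdef, ← Real.rpow_mul hxS.le]
      congr 2
      field_simp
    have f2 : (y / (a + y)) ^ (p - 2) ≤ (x / S) ^ (p - 2) := by
      apply Real.rpow_le_rpow (by positivity) _ hp2
      rw [div_le_div_iff₀ hay hS]
      linarith [hkey]
    have f3 : (0:ℝ) < (y / (a + y)) ^ (p - 2) := Real.rpow_pos_of_pos (div_pos hy0 hay) _
    have f4 : (y / w) ^ p ≤ y ^ p / ((y / (a + y)) ^ (p - 2)) := by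
      rw [f1]
      apply div_le_div_of_nonneg_left (Real.rpow_nonneg hy _) f3 f2
    have f5 : y ^ p / ((y / (a + y)) ^ (p - 2)) = (a + y) ^ (p - 2) * y ^ 2 := by
      have hyp2 : y ^ p = y ^ (p - 2) * y ^ 2 := by
        rw [← rpow_two', ← Real.rpow_add hy0]; norm_num
      rw [Real.div_rpow hy hay.le, div_div_eq_mul_div, hyp2]
      have hyne : (y:ℝ) ^ (p - 2) ≠ 0 := by positivity
      field_simp
    calc (y / w) ^ p / p ≤ (y / w) ^ p := by
          apply div_le_self (Real.rpow_nonneg (by positivity) _) (by linarith)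
      _ ≤ y ^ p / ((y / (a + y)) ^ (p - 2)) := f4
      _ = (a + y) ^ (p - 2) * y ^ 2 := f5
  calc x * y = (x * w) * (y / w) := hxy
    _ ≤ (x * w) ^ (p / (p - 1)) / (p / (p - 1)) + (y / w) ^ p / p := hyoung
    _ ≤ S ^ (p / (p - 1) - 2) * x ^ 2 + (a + y) ^ (p - 2) * y ^ 2 := add_le_add hT1 hT2

/-- Young-type inequality adapted to quasi-norms (Remark 2.4 c)). -/
theorem young_type_quasinorm_inequality (p l m a ε : ℝ)
    (hp : 2 ≤ p) (hl : 0 ≤ l) (hm : 0 ≤ m) (ha : 0 ≤ a) (hε : 0 < ε)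
    (hconv : 0 < a ^ (p - 1) + l ∨ l = 0) :
    l * m ≤ max ε⁻¹ (ε ^ (1 / (1 - p))) * ((a ^ (p - 1) + l) ^ (p / (p - 1) - 2) * l ^ 2)
      + ε * ((a + m) ^ (p - 2) * m ^ 2) := by
  have hp1' : (0:ℝ) < p - 1 := by linarith
  have hp2 : (0:ℝ) ≤ p - 2 := by linarith
  rcases hconv with hA | hl0
  swap
  · subst hl0
    simp only [zero_mul, zero_pow, mul_zero, ne_eq, OfNat.ofNat_ne_zero, not_false_iff,
      zero_add]
    positivity
  set B := a ^ (p - 1) with hBdef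
  have hB : 0 ≤ B := Real.rpow_nonneg ha _
  have he_nonpos : p / (p - 1) - 2 ≤ 0 := by
    rw [sub_nonpos, div_le_iff₀ hp1']; linarith
  have hXnn : (0:ℝ) ≤ (B + l) ^ (p / (p - 1) - 2) * l ^ 2 :=
    mul_nonneg (Real.rpow_nonneg (by linarith) _) (sq_nonneg _)
  by_cases hε1 : ε ≤ 1
  · -- δ = √ε ≤ 1
    set δ := Real.sqrt ε with hδdef
    have hδ0 : 0 < δ := Real.sqrt_pos.2 hε
    have hδ1 : δ ≤ 1 := by
      rw [show (1:ℝ) = Real.sqrt 1 by simp [Real.sqrt_one]]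
      exact Real.sqrt_le_sqrt hε1
    have hδ2 : δ ^ 2 = ε := Real.sq_sqrt hε.le
    have hstar := shifted_young p a (l / δ) (δ * m) hp ha (by positivity) (by positivity)
    have hx_eq : (l / δ) * (δ * m) = l * m := by field_simp
    have hT1 : (B + l / δ) ^ (p / (p - 1) - 2) * (l / δ) ^ 2
        ≤ ε⁻¹ * ((B + l) ^ (p / (p - 1) - 2) * l ^ 2) := by
      have hle : l ≤ l / δ := by
        rw [le_div_iff₀ hδ0]; nlinarith
      have k1 : (B + l / δ) ^ (p / (p - 1) - 2) ≤ (B + l) ^ (p / (p - 1) - 2) :=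
        Real.rpow_le_rpow_of_nonpos hA (by linarith) he_nonpos
      have k2 : (l / δ) ^ 2 = ε⁻¹ * l ^ 2 := by
        rw [div_pow, hδ2]; ring
      rw [k2]
      have : (0:ℝ) ≤ ε⁻¹ * l ^ 2 := by positivity
      calc (B + l / δ) ^ (p / (p - 1) - 2) * (ε⁻¹ * l ^ 2)
          ≤ (B + l) ^ (p / (p - 1) - 2) * (ε⁻¹ * l ^ 2) :=
            mul_le_mul_of_nonneg_right k1 this
        _ = ε⁻¹ * ((B + l) ^ (p / (p - 1) - 2) * l ^ 2) := by ring
    have hT2 : (a + δ * m) ^ (p - 2) * (δ * m) ^ 2 ≤ ε * ((a + m) ^ (p - 2) * m ^ 2) := by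
      have k1 : (a + δ * m) ^ (p - 2) ≤ (a + m) ^ (p - 2) := by
        apply Real.rpow_le_rpow (by positivity) _ hp2
        nlinarith
      have k2 : (δ * m) ^ 2 = ε * m ^ 2 := by rw [mul_pow, hδ2]
      rw [k2]
      calc (a + δ * m) ^ (p - 2) * (ε * m ^ 2) ≤ (a + m) ^ (p - 2) * (ε * m ^ 2) :=
            mul_le_mul_of_nonneg_right k1 (by positivity)
        _ = ε * ((a + m) ^ (p - 2) * m ^ 2) := by ring
    have hmax : ε⁻¹ ≤ max ε⁻¹ (ε ^ (1 / (1 - p))) := le_max_left _ _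
    have := mul_le_mul_of_nonneg_right hmax hXnn
    rw [hx_eq, ← hBdef] at hstar
    linarith
  · -- δ = ε ^ (1/p) ≥ 1
    push_neg at hε1
    set δ := ε ^ (1 / p) with hδdef
    have hδ0 : 0 < δ := Real.rpow_pos_of_pos hε _
    have hδ1 : 1 ≤ δ := Real.one_le_rpow hε1.le (by positivity)
    have hδrp : ∀ t : ℝ, δ ^ t = ε ^ (t / p) := by
      intro t
      rw [hδdef, ← Real.rpow_mul hε.le]
      congr 1; field_simp
    have hδp2 : δ ^ 2 = ε ^ (2 / p) := by
      rw [← rpow_two', hδrp]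
    have hstar := shifted_young p a (l / δ) (δ * m) hp ha (by positivity) (by positivity)
    have hx_eq : (l / δ) * (δ * m) = l * m := by field_simp
    have hT1 : (B + l / δ) ^ (p / (p - 1) - 2) * (l / δ) ^ 2
        ≤ ε ^ (1 / (1 - p)) * ((B + l) ^ (p / (p - 1) - 2) * l ^ 2) := by
      have hle : (B + l) / δ ≤ B + l / δ := by
        have : B / δ ≤ B := div_le_self hB hδ1
        have h2 : (B + l) / δ = B / δ + l / δ := by ring
        linarith [h2.le]
      have k1 : (B + l / δ) ^ (p / (p - 1) - 2) ≤ ((B + l) / δ) ^ (p / (p - 1) - 2) :=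
        Real.rpow_le_rpow_of_nonpos (by positivity) hle he_nonpos
      have k2 : ((B + l) / δ) ^ (p / (p - 1) - 2)
          = (B + l) ^ (p / (p - 1) - 2) * (δ ^ (p / (p - 1) - 2))⁻¹ := by
        rw [Real.div_rpow (by linarith) hδ0.le, div_eq_mul_inv]
      have k3 : (l / δ) ^ 2 = l ^ 2 * (δ ^ 2)⁻¹ := by
        rw [div_pow, div_eq_mul_inv]
      have k4 : (δ ^ (p / (p - 1) - 2))⁻¹ * (δ ^ 2)⁻¹ = ε ^ (1 / (1 - p)) := by
        rw [← rpow_two', ← mul_inv, ← Real.rpow_add hδ0,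
          show p / (p - 1) - 2 + 2 = p / (p - 1) by ring, hδrp,
          ← Real.rpow_neg hε.le]
        have h1p : (1:ℝ) - p ≠ 0 := sub_ne_zero.2 (by linarith)
        congr 1
        field_simp
        ring
      calc (B + l / δ) ^ (p / (p - 1) - 2) * (l / δ) ^ 2
          ≤ ((B + l) / δ) ^ (p / (p - 1) - 2) * (l / δ) ^ 2 :=
            mul_le_mul_of_nonneg_right k1 (by positivity)
        _ = ((B + l) ^ (p / (p - 1) - 2) * l ^ 2) * ((δ ^ (p / (p - 1) - 2))⁻¹ * (δ ^ 2)⁻¹) := by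
            rw [k2, k3]; ring
        _ = ε ^ (1 / (1 - p)) * ((B + l) ^ (p / (p - 1) - 2) * l ^ 2) := by rw [k4]; ring
    have hT2 : (a + δ * m) ^ (p - 2) * (δ * m) ^ 2 ≤ ε * ((a + m) ^ (p - 2) * m ^ 2) := by
      have k1 : (a + δ * m) ^ (p - 2) ≤ δ ^ (p - 2) * (a + m) ^ (p - 2) := by
        rw [← Real.mul_rpow hδ0.le (by linarith)]
        apply Real.rpow_le_rpow (by positivity) _ hp2
        nlinarith
      have k2 : δ ^ (p - 2) * δ ^ 2 = ε := by
        rw [← rpow_two', ← Real.rpow_add hδ0, show p - 2 + 2 = p by ring, hδrp,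
          div_self (by positivity : p ≠ 0), Real.rpow_one]
      calc (a + δ * m) ^ (p - 2) * (δ * m) ^ 2
          = ((a + δ * m) ^ (p - 2) * δ ^ 2) * m ^ 2 := by rw [mul_pow]; ring
        _ ≤ ((δ ^ (p - 2) * (a + m) ^ (p - 2)) * δ ^ 2) * m ^ 2 := by
            apply mul_le_mul_of_nonneg_right _ (sq_nonneg _)
            apply mul_le_mul_of_nonneg_right k1 (by positivity)
        _ = (δ ^ (p - 2) * δ ^ 2) * ((a + m) ^ (p - 2) * m ^ 2) := by ring
        _ = ε * ((a + m) ^ (p - 2) * m ^ 2) := by rw [k2]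
    have hmax : ε ^ (1 / (1 - p)) ≤ max ε⁻¹ (ε ^ (1 / (1 - p))) := le_max_right _ _
    have := mul_le_mul_of_nonneg_right hmax hXnn
    rw [hx_eq, ← hBdef] at hstar
    linarith
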